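/- There exist no elements A, B, D ∈ PSL₂(ℂ) satisfying AB = BA, D·A·D⁻¹ = B and D·B·D⁻¹ = (AB)⁻¹ such that the subgroup of PSL₂(ℂ) generated by A, B and D is dihedral and non-abelian. (This is the key step showing that the solvable group G(t³−1) ≅ ℤ³ ⋊ ℤ admits no representation into PSL₂(ℂ) with irreducible infinite image.) -/

import Mathlib

/-- `SL₂(ℂ)`: the group of 2×2 complex matrices of determinant 1. -/
abbrev SL2 : Type := Matrix.SpecialLinearGroup (Fin 2) ℂ

/-- `PSL₂(ℂ)`: the quotient of `SL₂(ℂ)` by its center `{±I}`. -/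
abbrev PSL2 : Type := SL2 ⧸ Subgroup.center SL2

/-- A matrix in `SL₂(ℂ)` is diagonal of the form `[[λ,0],[0,λ⁻¹]]` or
anti-diagonal of the form `[[0,μ],[-μ⁻¹,0]]`. -/
def IsDiagOrAnti (M : SL2) : Prop :=
  (∃ l : ℂ, l ≠ 0 ∧ (M : Matrix (Fin 2) (Fin 2) ℂ) = !![l, 0; 0, l⁻¹]) ∨
  (∃ m : ℂ, m ≠ 0 ∧ (M : Matrix (Fin 2) (Fin 2) ℂ) = !![0, m; -m⁻¹, 0])

/-- A subgroup `H` of `PSL₂(ℂ)` is dihedral if some conjugate of `H` is contained in the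
image in `PSL₂(ℂ)` of the set of diagonal and anti-diagonal matrices in `SL₂(ℂ)`. -/
def IsDihedral (H : Subgroup PSL2) : Prop :=
  ∃ g : PSL2, ∀ h ∈ H, ∃ M : SL2, IsDiagOrAnti M ∧
    g * h * g⁻¹ = (QuotientGroup.mk M : PSL2)

open Matrix Matrix.SpecialLinearGroup

lemma scalar_eq_smul_one (s : ℂ) : scalar (Fin 2) s = s • (1 : Matrix (Fin 2) (Fin 2) ℂ) := by
  rw [scalar_apply]
  ext i j
  by_cases h : i = j <;> simp [Matrix.diagonal, Matrix.one_apply, h]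

lemma mk_eq_iff_smul (M N : SL2) :
    (QuotientGroup.mk M : PSL2) = QuotientGroup.mk N ↔
      ∃ s : ℂ, (s = 1 ∨ s = -1) ∧ (M : Matrix (Fin 2) (Fin 2) ℂ) = s • (N : Matrix (Fin 2) (Fin 2) ℂ) := by
  rw [QuotientGroup.eq]
  constructor
  · intro h
    obtain ⟨r, hr, hrs⟩ := mem_center_iff.mp h
    have hcard : Fintype.card (Fin 2) = 2 := by simp
    rw [hcard] at hr
    have hs : r = 1 ∨ r = -1 := by
      have : (r - 1) * (r + 1) = 0 := by linear_combination hr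
      rcases mul_eq_zero.mp this with h' | h'
      · exact Or.inl (by linear_combination h')
      · exact Or.inr (by linear_combination h')
    have hN : (N : Matrix (Fin 2) (Fin 2) ℂ) = r • (M : Matrix (Fin 2) (Fin 2) ℂ) := by
      have hMN : M * (M⁻¹ * N) = N := by group
      calc (N : Matrix (Fin 2) (Fin 2) ℂ) = ((M * (M⁻¹ * N) : SL2) : Matrix (Fin 2) (Fin 2) ℂ) := by rw [hMN]
        _ = (M : Matrix (Fin 2) (Fin 2) ℂ) * ((M⁻¹ * N : SL2) : Matrix (Fin 2) (Fin 2) ℂ) := coe_mul _ _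
        _ = (M : Matrix (Fin 2) (Fin 2) ℂ) * (r • 1) := by rw [← hrs, scalar_eq_smul_one]
        _ = r • (M : Matrix (Fin 2) (Fin 2) ℂ) := by rw [mul_smul_comm, mul_one]
    refine ⟨r, hs, ?_⟩
    rw [hN, smul_smul]
    have : r * r = 1 := by rcases hs with h' | h' <;> rw [h'] <;> ring
    rw [this, one_smul]
  · rintro ⟨s, hs, hMs⟩
    have hdet : Matrix.det (s • (1 : Matrix (Fin 2) (Fin 2) ℂ)) = 1 := by
      rw [Matrix.det_smul, Matrix.det_one, Fintype.card_fin, mul_one]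
      rcases hs with h' | h' <;> subst h' <;> norm_num
    set Z : SL2 := ⟨s • 1, hdet⟩ with hZ
    have hZc : Z ∈ Subgroup.center SL2 := by
      refine mem_center_iff.mpr ⟨s, ?_, ?_⟩
      · rw [Fintype.card_fin]
        rcases hs with h' | h' <;> rw [h'] <;> norm_num
      · rw [scalar_eq_smul_one]
    have hMNZ : M = N * Z := by
      apply Subtype.ext
      rw [coe_mul, hMs, hZ]
      simp [mul_smul_comm]
    have : M⁻¹ * N = Z⁻¹ := by rw [hMNZ]; group
    rw [this]
    exact inv_mem hZc

lemma pair_commute (MA MB MD : SL2) (tA : IsDiagOrAnti MA) (tB : IsDiagOrAnti MB)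
    (tD : IsDiagOrAnti MD)
    (r2 : (QuotientGroup.mk MD : PSL2) * QuotientGroup.mk MA
        = QuotientGroup.mk MB * QuotientGroup.mk MD)
    (r3 : (QuotientGroup.mk MA : PSL2) * QuotientGroup.mk MB * QuotientGroup.mk MD
          * QuotientGroup.mk MB = QuotientGroup.mk MD) :
    ((QuotientGroup.mk MA : PSL2) * QuotientGroup.mk MD
        = QuotientGroup.mk MD * QuotientGroup.mk MA) ∧
    ((QuotientGroup.mk MB : PSL2) * QuotientGroup.mk MD
        = QuotientGroup.mk MD * QuotientGroup.mk MB) := by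
  obtain ⟨s, hs, hR2⟩ := (mk_eq_iff_smul (MD * MA) (MB * MD)).mp (by simpa using r2)
  have hs0 : s ≠ 0 := by rcases hs with h | h <;> rw [h] <;> norm_num
  have hss : s * s = 1 := by rcases hs with h | h <;> rw [h] <;> ring
  rcases tA with ⟨l, hl, hA⟩ | ⟨m, hm, hA⟩
  · rcases tD with ⟨k, hk, hD⟩ | ⟨k, hk, hD⟩
    · -- A diag, D diag
      have hcom : MA * MD = MD * MA := by
        apply Subtype.ext
        rw [coe_mul, coe_mul, hA, hD, Matrix.mul_fin_two, Matrix.mul_fin_two]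
        ring_nf
      have had : (QuotientGroup.mk MA : PSL2) * QuotientGroup.mk MD
          = QuotientGroup.mk MD * QuotientGroup.mk MA := by
        rw [← QuotientGroup.mk_mul, ← QuotientGroup.mk_mul, hcom]
      have hb : (QuotientGroup.mk MB : PSL2) = QuotientGroup.mk MA :=
        mul_right_cancel (r2.symm.trans had.symm)
      exact ⟨had, by rw [hb]; exact had⟩
    · -- A diag, D anti
      rw [coe_mul, coe_mul, hD, hA, Matrix.mul_fin_two] at hR2
      rcases tB with ⟨l', hl', hB⟩ | ⟨m', hm', hB⟩
      · rw [hB, Matrix.mul_fin_two] at hR2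
        have h01 := congrFun (congrFun hR2 0) 1
        simp at h01
        -- h01 : k * l⁻¹ = s * (l' * k)  (roughly)
        have e1 : l * l' = s := by
          have h2 : (1 : ℂ) = s * l' * l := by
            apply mul_left_cancel₀ hk
            field_simp at h01
            linear_combination k * h01
          linear_combination (-s) * h2 + (-(l * l')) * hss
        have e2 : l⁻¹ * l'⁻¹ = s := by
          rw [← mul_inv, e1]
          rcases hs with h | h <;> rw [h] <;> norm_num
        have hab1 : (QuotientGroup.mk MA : PSL2) * QuotientGroup.mk MB = 1 := by
          rw [← QuotientGroup.mk_mul, show ((1 : PSL2) = QuotientGroup.mk (1 : SL2)) from rfl]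
          refine (mk_eq_iff_smul _ _).mpr ⟨s, hs, ?_⟩
          rw [coe_mul, hA, hB, Matrix.mul_fin_two]
          show _ = s • (1 : Matrix (Fin 2) (Fin 2) ℂ)
          ext i j
          fin_cases i <;> fin_cases j <;> simp [Matrix.one_apply, e1, e2]
        have hb1 : (QuotientGroup.mk MB : PSL2) = 1 := by
          have := r3
          rw [hab1, one_mul] at this
          exact mul_left_cancel (this.trans (mul_one _).symm)
        have ha1 : (QuotientGroup.mk MA : PSL2) = 1 := by
          have := hab1
          rw [hb1, mul_one] at this
          exact this
        rw [ha1, hb1, one_mul, mul_one]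
        exact ⟨rfl, rfl⟩
      · -- B anti: contradiction via (0,0) of r2
        exfalso
        rw [hB, Matrix.mul_fin_two] at hR2
        have h00 := congrFun (congrFun hR2 0) 0
        simp [hs0, hm', hk, inv_eq_zero, mul_eq_zero] at h00
  · -- A anti
    obtain ⟨s2, hs2, hR3⟩ := (mk_eq_iff_smul (MA * MB * MD * MB) MD).mp (by simpa using r3)
    have hs20 : s2 ≠ 0 := by rcases hs2 with h | h <;> rw [h] <;> norm_num
    exfalso
    rcases tD with ⟨k, hk, hD⟩ | ⟨k, hk, hD⟩
    · rcases tB with ⟨l', hl', hB⟩ | ⟨m', hm', hB⟩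
      · -- r2: (D(k) N(m)) 00 = 0 vs s*(D(l')D(k)) 00 = s l' k
        rw [coe_mul, coe_mul, hD, hA, hB, Matrix.mul_fin_two, Matrix.mul_fin_two] at hR2
        have h00 := congrFun (congrFun hR2 0) 0
        simp [hs0, hl', hk, mul_eq_zero] at h00
      · -- r3 00 : anti = s' * D(k)
        rw [coe_mul, coe_mul, coe_mul, hA, hB, hD, Matrix.mul_fin_two, Matrix.mul_fin_two,
          Matrix.mul_fin_two] at hR3
        have h00 := congrFun (congrFun hR3 0) 0
        simp [hs20, hk, mul_eq_zero] at h00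
    · rcases tB with ⟨l', hl', hB⟩ | ⟨m', hm', hB⟩
      · -- r2 00 : N(k)N(m) 00 = -k m⁻¹ ≠ 0 vs s * (D(l')N(k)) 00 = 0
        rw [coe_mul, coe_mul, hD, hA, hB, Matrix.mul_fin_two, Matrix.mul_fin_two] at hR2
        have h00 := congrFun (congrFun hR2 0) 0
        simp [hs0, hm, hk, inv_eq_zero, mul_eq_zero] at h00
      · -- r3 00 : N(m)N(m')N(k)N(m') 00 ≠ 0 vs s' * N(k) 00 = 0
        rw [coe_mul, coe_mul, coe_mul, hA, hB, hD, Matrix.mul_fin_two, Matrix.mul_fin_two,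
          Matrix.mul_fin_two] at hR3
        have h00 := congrFun (congrFun hR3 0) 0
        simp [hs20, hm, hm', hk, inv_eq_zero, mul_eq_zero] at h00

/-- There are no `A, B, D ∈ PSL₂(ℂ)` with `AB = BA`, `DAD⁻¹ = B`, `DBD⁻¹ = (AB)⁻¹`
generating a non-abelian dihedral subgroup: the key step showing that `G(t³−1) ≅ ℤ³ ⋊ ℤ`
has no representation into `PSL₂(ℂ)` with irreducible infinite image. -/
theorem Gt3_no_nonabelian_dihedral :
    ¬ ∃ A B D : PSL2, A * B = B * A ∧ D * A * D⁻¹ = B ∧ D * B * D⁻¹ = (A * B)⁻¹ ∧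
      IsDihedral (Subgroup.closure {A, B, D}) ∧
      ¬ (∀ x ∈ Subgroup.closure {A, B, D}, ∀ y ∈ Subgroup.closure {A, B, D},
          x * y = y * x) := by
  rintro ⟨A, B, D, hcomm, h2, h3, ⟨g, hg⟩, hnab⟩
  apply hnab
  have hAm : A ∈ Subgroup.closure ({A, B, D} : Set PSL2) :=
    Subgroup.subset_closure (by simp)
  have hBm : B ∈ Subgroup.closure ({A, B, D} : Set PSL2) :=
    Subgroup.subset_closure (by simp)
  have hDm : D ∈ Subgroup.closure ({A, B, D} : Set PSL2) :=
    Subgroup.subset_closure (by simp)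
  obtain ⟨MA, tA, hgA⟩ := hg A hAm
  obtain ⟨MB, tB, hgB⟩ := hg B hBm
  obtain ⟨MD, tD, hgD⟩ := hg D hDm
  set φ := MulAut.conj g with hφ
  have pA : φ A = QuotientGroup.mk MA := by rw [hφ, MulAut.conj_apply]; exact hgA
  have pB : φ B = QuotientGroup.mk MB := by rw [hφ, MulAut.conj_apply]; exact hgB
  have pD : φ D = QuotientGroup.mk MD := by rw [hφ, MulAut.conj_apply]; exact hgD
  have t2 : (QuotientGroup.mk MD : PSL2) * QuotientGroup.mk MA * (QuotientGroup.mk MD)⁻¹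
      = QuotientGroup.mk MB := by
    simp only [← pA, ← pB, ← pD, ← _root_.map_mul, ← _root_.map_inv]
    exact congrArg φ h2
  have t3 : (QuotientGroup.mk MD : PSL2) * QuotientGroup.mk MB * (QuotientGroup.mk MD)⁻¹
      = ((QuotientGroup.mk MA : PSL2) * QuotientGroup.mk MB)⁻¹ := by
    simp only [← pA, ← pB, ← pD, ← _root_.map_mul, ← _root_.map_inv]
    exact congrArg φ h3
  have r2 : (QuotientGroup.mk MD : PSL2) * QuotientGroup.mk MA
      = QuotientGroup.mk MB * QuotientGroup.mk MD := by
    rw [← t2]; group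
  have r3 : (QuotientGroup.mk MA : PSL2) * QuotientGroup.mk MB * QuotientGroup.mk MD
      * QuotientGroup.mk MB = QuotientGroup.mk MD := by
    calc (QuotientGroup.mk MA : PSL2) * QuotientGroup.mk MB * QuotientGroup.mk MD
          * QuotientGroup.mk MB
        = (QuotientGroup.mk MA * QuotientGroup.mk MB)
            * ((QuotientGroup.mk MD : PSL2) * QuotientGroup.mk MB * (QuotientGroup.mk MD)⁻¹)
            * QuotientGroup.mk MD := by group
      _ = QuotientGroup.mk MD := by rw [t3]; group
  obtain ⟨cAD, cBD⟩ := pair_commute MA MB MD tA tB tD r2 r3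
  have hAD : A * D = D * A := by
    apply φ.injective
    rw [_root_.map_mul, _root_.map_mul, pA, pD, cAD]
  have hBD : B * D = D * B := by
    apply φ.injective
    rw [_root_.map_mul, _root_.map_mul, pB, pD, cBD]
  intro x hx y hy
  refine Subgroup.closure_induction₂ (p := fun x y _ _ => x * y = y * x)
    ?_ ?_ ?_ ?_ ?_ ?_ ?_ hx hy
  · rintro x y hx hy
    simp only [Set.mem_insert_iff, Set.mem_singleton_iff] at hx hy
    rcases hx with rfl | rfl | rfl <;> rcases hy with rfl | rfl | rfl
    · rfl
    · exact hcomm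
    · exact hAD
    · exact hcomm.symm
    · rfl
    · exact hBD
    · exact hAD.symm
    · exact hBD.symm
    · rfl
  · intro x _; rw [one_mul, mul_one]
  · intro x _; rw [one_mul, mul_one]
  · intro x y z _ _ _ h1 h4
    exact Commute.mul_left h1 h4
  · intro y z x _ _ _ h1 h4
    exact Commute.mul_right h1 h4
  · intro x y _ _ h1
    exact Commute.inv_left h1
  · intro x y _ _ h1
    exact Commute.inv_right h1
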